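/- Let G be a finite group acting on a set X, and let Ω : G × G × X → ℂˣ satisfy the generalized 2-cocycle condition Ω(g,h,kx)·Ω(gh,k,x) = Ω(g,hk,x)·Ω(h,k,x) for all g,h,k ∈ G and x ∈ X. Then Ω^{|G|} is a coboundary: there exists χ : G × X → ℂˣ such that Ω(g,h,x)^{|G|} = χ(g,hx)·χ(h,x)·χ(gh,x)⁻¹ for all g,h ∈ G, x ∈ X. (One may take χ(g,x) = det X^x_g, where X^x_g is the linear operator on ℂG defined by X^x_g|h⟩ = Ω(g,h,h⁻¹x)|gh⟩, which satisfies X^{hx}_g ∘ X^x_h = Ω(g,h,x)·X^x_{gh}.) -/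
import Mathlib


/-- Determinant trick: the `|G|`-th power of a generalized 2-cocycle on a finite
group acting on a set is a coboundary. -/
theorem generalized_cocycle_pow_card_is_coboundary
    {G : Type*} [Group G] [Fintype G] {X : Type*} [MulAction G X]
    (Ω : G → G → X → ℂˣ)
    (hΩ : ∀ (g h k : G) (x : X),
      Ω g h (k • x) * Ω (g * h) k x = Ω g (h * k) x * Ω h k x) :
    ∃ χ : G → X → ℂˣ, ∀ (g h : G) (x : X),
      (Ω g h x) ^ (Fintype.card G) = χ g (h • x) * χ h x * (χ (g * h) x)⁻¹ := by
  refine ⟨fun g x => ∏ k : G, Ω g k (k⁻¹ • x), fun g h x => ?_⟩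
  have reindex : (∏ k : G, Ω g k (k⁻¹ • h • x)) = ∏ k : G, Ω g (h * k) (k⁻¹ • x) := by
    refine (Fintype.prod_equiv (Equiv.mulLeft h) _ _ fun k => ?_).symm
    simp [mul_smul]
  have key : (∏ k : G, Ω g k (k⁻¹ • h • x)) * (∏ k : G, Ω h k (k⁻¹ • x)) =
      Ω g h x ^ Fintype.card G * ∏ k : G, Ω (g * h) k (k⁻¹ • x) := by
    rw [reindex, ← Finset.prod_mul_distrib, ← Finset.card_univ, ← Finset.prod_const, ← Finset.prod_mul_distrib]
    refine Finset.prod_congr rfl fun k _ => ?_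
    have := hΩ g h k (k⁻¹ • x)
    rw [smul_inv_smul] at this
    exact (this.symm)
  rw [eq_comm, mul_inv_eq_iff_eq_mul, key]
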